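/- There exists a universal constant C > 0 such that for all sufficiently large n the following holds with p = C·√(log n / n): there exists a collection 𝒢 of graphs on [n] such that every triangle-free graph on [n] is a subgraph of some member of 𝒢 and Σ_{G∈𝒢} (1−p)^{C(n,2) − e(G)} ≤ 1/2. In other words, the expectation-threshold of the down-set of triangle-free graphs on [n] is O(√(log n / n)). -/

import Mathlib

open Finset SimpleGraph Real

section AuxProof

variable {n : ℕ}

lemma sum_powerset_card {α : Type*} [DecidableEq α] (F : Finset α) :
    ∑ S ∈ F.powerset, S.card = F.card * 2 ^ (F.card - 1) := by
  induction F using Finset.induction_on with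
  | empty => simp
  | @insert a F ha ih =>
    have hdisj : Disjoint F.powerset (F.powerset.image (insert a)) := by
      rw [Finset.disjoint_right]
      intro S hS hS'
      obtain ⟨T, hT, rfl⟩ := Finset.mem_image.1 hS
      exact ha (Finset.mem_powerset.1 hS' (Finset.mem_insert_self a T))
    have hinj : ∀ S ∈ F.powerset, ∀ T ∈ F.powerset, insert a S = insert a T → S = T := by
      intro S hS T hT hST
      have hSa : a ∉ S := fun h => ha (Finset.mem_powerset.1 hS h)
      have hTa : a ∉ T := fun h => ha (Finset.mem_powerset.1 hT h)
      rw [← Finset.erase_insert hSa, ← Finset.erase_insert hTa, hST]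
    rw [Finset.powerset_insert, Finset.sum_union hdisj, Finset.sum_image hinj]
    have h1 : ∀ S ∈ F.powerset, (insert a S).card = S.card + 1 := by
      intro S hS
      exact Finset.card_insert_of_notMem fun hmem => ha (Finset.mem_powerset.1 hS hmem)
    rw [Finset.sum_congr rfl h1, Finset.sum_add_distrib, ih, Finset.sum_const,
      Finset.card_powerset, Finset.card_insert_of_notMem ha]
    cases F.card with
    | zero => simp
    | succ k => simp only [Nat.add_sub_cancel, smul_eq_mul, mul_one, pow_succ]; ring


def Indep (G : SimpleGraph (Fin n)) (s : Finset (Fin n)) : Prop :=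
  ∀ a ∈ s, ∀ b ∈ s, ¬ G.Adj a b

lemma nbhd_indep (G : SimpleGraph (Fin n)) [DecidableRel G.Adj] (h3 : G.CliqueFree 3)
    (v : Fin n) : Indep G (G.neighborFinset v) := by
  intro a ha b hb hab
  rw [SimpleGraph.mem_neighborFinset] at ha hb
  exact h3 {v, a, b} (SimpleGraph.is3Clique_triple_iff.2 ⟨ha, hb, hab⟩)

lemma greedy_aux (G : SimpleGraph (Fin n)) [DecidableRel G.Adj] :
    ∀ m (A : Finset (Fin n)), A.card ≤ m →
      ∃ s ⊆ A, Indep G s ∧ A.card ≤ s.card * (G.maxDegree + 1) := by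
  intro m
  induction m with
  | zero =>
    intro A hA
    exact ⟨∅, Finset.empty_subset _, fun a ha => absurd ha (Finset.notMem_empty a),
      by omega⟩
  | succ m ih =>
    intro A hA
    rcases A.eq_empty_or_nonempty with rfl | ⟨v, hv⟩
    · exact ⟨∅, Finset.empty_subset _, fun a ha => absurd ha (Finset.notMem_empty a), by simp⟩
    · set Nc := insert v (G.neighborFinset v) with hNc
      have hNcc : Nc.card ≤ G.maxDegree + 1 := by
        calc Nc.card ≤ (G.neighborFinset v).card + 1 := Finset.card_insert_le _ _
        _ ≤ G.maxDegree + 1 := by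
          have := G.degree_le_maxDegree v
          rw [SimpleGraph.degree] at this; omega
      have hcard' : (A \ Nc).card < A.card := by
        apply Finset.card_lt_card
        constructor
        · exact Finset.sdiff_subset
        · intro hsub
          have := hsub hv
          rw [Finset.mem_sdiff] at this
          exact this.2 (Finset.mem_insert_self _ _)
      obtain ⟨s, hsub, hindep, hc⟩ := ih (A \ Nc) (by omega)
      have hvs : v ∉ s := fun h => ((Finset.mem_sdiff.1 (hsub h)).2 (Finset.mem_insert_self _ _))
      refine ⟨insert v s, ?_, ?_, ?_⟩
      · intro x hx
        rcases Finset.mem_insert.1 hx with rfl | hx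
        · exact hv
        · exact (Finset.mem_sdiff.1 (hsub hx)).1
      · intro a ha b hb hab
        have key : ∀ u ∈ s, ¬ G.Adj v u := by
          intro u hu hadj
          exact (Finset.mem_sdiff.1 (hsub hu)).2
            (Finset.mem_insert_of_mem ((G.mem_neighborFinset v u).2 hadj))
        rcases Finset.mem_insert.1 ha with ha' | ha' <;>
          rcases Finset.mem_insert.1 hb with hb' | hb'
        · subst ha'; subst hb'; exact G.irrefl hab
        · subst ha'; exact key b hb' hab
        · subst hb'; exact key a ha' hab.symm
        · exact hindep a ha' b hb' hab
      · rw [Finset.card_insert_of_notMem hvs]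
        have h1 : A.card ≤ (A \ Nc).card + Nc.card := by
          have := Finset.le_card_sdiff Nc A
          omega
        calc A.card ≤ (A \ Nc).card + Nc.card := h1
          _ ≤ s.card * (G.maxDegree + 1) + (G.maxDegree + 1) := by omega
          _ = (s.card + 1) * (G.maxDegree + 1) := by ring

lemma greedy (G : SimpleGraph (Fin n)) [DecidableRel G.Adj] :
    ∃ s : Finset (Fin n), Indep G s ∧ n ≤ s.card * (G.maxDegree + 1) := by
  obtain ⟨s, _, hi, hc⟩ := greedy_aux G (Finset.univ.card) Finset.univ le_rfl
  exact ⟨s, hi, by simpa using hc⟩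


def indepSets (G : SimpleGraph (Fin n)) [DecidableRel G.Adj] : Finset (Finset (Fin n)) :=
  Finset.univ.filter (fun I => ∀ a ∈ I, ∀ b ∈ I, ¬ G.Adj a b)

lemma nbhd_indep' (G : SimpleGraph (Fin n)) [DecidableRel G.Adj] (h3 : G.CliqueFree 3)
    (v : Fin n) : ∀ a ∈ G.neighborFinset v, ∀ b ∈ G.neighborFinset v, ¬ G.Adj a b := by
  intro a ha b hb hab
  rw [SimpleGraph.mem_neighborFinset] at ha hb
  exact h3 {v, a, b} (SimpleGraph.is3Clique_triple_iff.2 ⟨ha, hb, hab⟩)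

lemma fiber_eq (G : SimpleGraph (Fin n)) [DecidableRel G.Adj] (h3 : G.CliqueFree 3) (v : Fin n)
    (J : Finset (Fin n)) (hJd : ∀ x ∈ J, x ∉ insert v (G.neighborFinset v))
    (hJind : ∀ a ∈ J, ∀ b ∈ J, ¬ G.Adj a b) :
    (indepSets G).filter (fun I => I \ insert v (G.neighborFinset v) = J) =
      ((G.neighborFinset v).filter (fun u => ∀ w ∈ J, ¬ G.Adj u w)).powerset.image
          (fun S => J ∪ S) ∪ {insert v J} := by
  classical
  have hvNv : v ∉ G.neighborFinset v := by
    simp [SimpleGraph.mem_neighborFinset]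
  ext I
  simp only [Finset.mem_filter, Finset.mem_union, Finset.mem_image, Finset.mem_powerset,
    Finset.mem_singleton, indepSets, Finset.mem_univ, true_and]
  constructor
  · rintro ⟨hind, hg⟩
    have hJI : J ⊆ I := by
      intro x hx; rw [← hg] at hx; exact (Finset.mem_sdiff.1 hx).1
    by_cases hv : v ∈ I
    · right
      have hIN : ∀ u ∈ G.neighborFinset v, u ∉ I := fun u hu hui =>
        hind v hv u hui ((G.mem_neighborFinset v u).1 hu)
      apply Finset.ext
      intro x
      simp only [Finset.mem_insert]
      constructor
      · intro hx
        by_cases hxv : x = v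
        · exact Or.inl hxv
        · right
          rw [← hg, Finset.mem_sdiff]
          refine ⟨hx, ?_⟩
          intro hmem
          rcases Finset.mem_insert.1 hmem with h | h
          · exact hxv h
          · exact hIN x h hx
      · rintro (rfl | hx)
        · exact hv
        · exact hJI hx
    · left
      refine ⟨I ∩ G.neighborFinset v, ?_, ?_⟩
      · intro u hu
        rcases Finset.mem_inter.1 hu with ⟨huI, huN⟩
        rw [Finset.mem_filter]
        exact ⟨huN, fun w hw => hind u huI w (hJI hw)⟩
      · apply Finset.ext
        intro x
        simp only [Finset.mem_union, Finset.mem_inter]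
        constructor
        · rintro (hx | ⟨hx, _⟩)
          · exact hJI hx
          · exact hx
        · intro hx
          by_cases hxN : x ∈ G.neighborFinset v
          · exact Or.inr ⟨hx, hxN⟩
          · left
            rw [← hg, Finset.mem_sdiff]
            refine ⟨hx, ?_⟩
            intro hmem
            rcases Finset.mem_insert.1 hmem with rfl | h
            · exact hv hx
            · exact hxN h
  · rintro (⟨S, hSF, rfl⟩ | rfl)
    · have hSsub : ∀ u ∈ S, u ∈ G.neighborFinset v ∧ ∀ w ∈ J, ¬ G.Adj u w := by
        intro u hu
        have := hSF hu
        rw [Finset.mem_filter] at this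
        exact this
      constructor
      · intro a ha b hb hab
        rcases Finset.mem_union.1 ha with haJ | haS <;> rcases Finset.mem_union.1 hb with hbJ | hbS
        · exact hJind a haJ b hbJ hab
        · exact (hSsub b hbS).2 a haJ hab.symm
        · exact (hSsub a haS).2 b hbJ hab
        · exact nbhd_indep' G h3 v a (hSsub a haS).1 b (hSsub b hbS).1 hab
      · apply Finset.ext
        intro x
        rw [Finset.mem_sdiff, Finset.mem_union]
        constructor
        · rintro ⟨hx | hx, hnc⟩
          · exact hx
          · exact absurd (Finset.mem_insert_of_mem (hSsub x hx).1) hnc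
        · intro hx
          exact ⟨Or.inl hx, hJd x hx⟩
    · constructor
      · intro a ha b hb hab
        rcases Finset.mem_insert.1 ha with rfl | haJ <;> rcases Finset.mem_insert.1 hb with h | hbJ
        · exact G.irrefl (h ▸ hab)
        · exact hJd b hbJ (Finset.mem_insert_of_mem ((G.mem_neighborFinset a b).2 hab))
        · subst h
          exact hJd a haJ (Finset.mem_insert_of_mem ((G.mem_neighborFinset b a).2 hab.symm))
        · exact hJind a haJ b hbJ hab
      · apply Finset.ext
        intro x
        rw [Finset.mem_sdiff, Finset.mem_insert]
        constructor
        · rintro ⟨rfl | hx, hnc⟩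
          · exact absurd (Finset.mem_insert_self x _) hnc
          · exact hx
        · intro hx
          exact ⟨Or.inr hx, hJd x hx⟩


lemma key_ineq (k : ℕ) (D : ℝ) (hD : 0 ≤ D) :
    (2 ^ k + 1 : ℝ) * (Real.log D / 16) ≤ (k * 2 ^ (k - 1) : ℕ) + D := by
  have hpos : (0:ℝ) ≤ (k * 2 ^ (k - 1) : ℕ) := by positivity
  rcases le_or_gt D 1 with hD1 | hD1
  · have : Real.log D ≤ 0 := Real.log_nonpos hD hD1
    nlinarith [pow_pos (by norm_num : (0:ℝ) < 2) k]
  -- now D > 1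
  rcases le_or_gt D (4 ^ k) with hcase | hcase
  · -- log D ≤ 2k
    have hlog : Real.log D ≤ 2 * k := by
      have h4 : Real.log 4 ≤ 2 := by
        have h2 : Real.log 2 ≤ 1 := by
          have := Real.log_le_sub_one_of_pos (by norm_num : (0:ℝ) < 2); linarith
        have h42 : Real.log 4 = 2 * Real.log 2 := by
          rw [show (4:ℝ) = 2^2 by norm_num, Real.log_pow]; norm_num
        linarith
      calc Real.log D ≤ Real.log (4 ^ k) := Real.log_le_log (by linarith) hcase
        _ = k * Real.log 4 := by rw [Real.log_pow]
        _ ≤ k * 2 := mul_le_mul_of_nonneg_left h4 (Nat.cast_nonneg k)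
        _ = 2 * k := by ring
    have hk1 : 1 ≤ k := by
      by_contra h
      have : k = 0 := by omega
      subst this
      simp at hcase
      linarith
    have hcast : ((k * 2 ^ (k - 1) : ℕ) : ℝ) = k * 2 ^ (k - 1) := by push_cast; ring
    have h2k : (2:ℝ) ^ k = 2 * 2 ^ (k - 1) := by
      rw [← pow_succ']
      congr 1
      omega
    have hlognn : 0 ≤ Real.log D := Real.log_nonneg (le_of_lt hD1)
    -- (2^k+1) * logD/16 ≤ (2^k + 1) * 2k/16 = k(2^k+1)/8 ≤ k * 2 * 2^k / 8 = k 2^(k-1) /2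
    rw [hcast]
    have hp : (0:ℝ) < 2 ^ (k-1) := by positivity
    have hk1' : (1:ℝ) ≤ k := by exact_mod_cast hk1
    have h1p : (1:ℝ) ≤ 2 ^ (k-1) := one_le_pow₀ (by norm_num)
    have hprod : (2 ^ k + 1 : ℝ) * Real.log D ≤ (2 ^ k + 1) * (2 * k) :=
      mul_le_mul_of_nonneg_left hlog (by positivity)
    have hka : (1:ℝ) * 1 ≤ k * 2 ^ (k-1) := by
      apply mul_le_mul hk1' h1p (by norm_num) (by linarith)
    nlinarith [mul_le_mul hk1' h1p (by norm_num : (0:ℝ) ≤ 1) (by linarith : (0:ℝ) ≤ (k:ℝ))]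
  · -- 4^k < D: 2^k ≤ √D, log D ≤ 2√D
    have hsD : (0:ℝ) < Real.sqrt D := Real.sqrt_pos.2 (by linarith)
    have h2k : (2:ℝ) ^ k ≤ Real.sqrt D := by
      rw [← Real.sqrt_sq (by positivity : (0:ℝ) ≤ (2:ℝ)^k)]
      apply Real.sqrt_le_sqrt
      calc ((2:ℝ)^k)^2 = 4 ^ k := by rw [← pow_mul, pow_mul']; norm_num
        _ ≤ D := le_of_lt hcase
    have hsD1 : 1 ≤ Real.sqrt D := by
      calc (1:ℝ) ≤ 2 ^ k := one_le_pow₀ (by norm_num)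
        _ ≤ Real.sqrt D := h2k
    have hlog : Real.log D ≤ 2 * Real.sqrt D := by
      have := Real.log_le_sub_one_of_pos hsD
      have hls : Real.log (Real.sqrt D) = Real.log D / 2 := Real.log_sqrt hD
      linarith
    have hDsq : Real.sqrt D * Real.sqrt D = D := Real.mul_self_sqrt hD
    -- (2^k+1)(logD/16) ≤ (√D + 1)(2√D)/16 ≤ (2√D)(2√D)/16 = D/4 ≤ D
    have hlognn : 0 ≤ Real.log D := Real.log_nonneg (le_of_lt hD1)
    nlinarith


lemma pervertex (G : SimpleGraph (Fin n)) [DecidableRel G.Adj] (h3 : G.CliqueFree 3)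
    (v : Fin n) :
    ((indepSets G).card : ℝ) * (Real.log (G.maxDegree) / 16) ≤
      ∑ I ∈ indepSets G, (((I ∩ G.neighborFinset v).card : ℝ)
        + (G.maxDegree : ℝ) * (if v ∈ I then 1 else 0)) := by
  classical
  have hvNv : v ∉ G.neighborFinset v := by simp [SimpleGraph.mem_neighborFinset]
  set f : Finset (Fin n) → ℝ := fun I =>
    ((I ∩ G.neighborFinset v).card : ℝ) + (G.maxDegree : ℝ) * (if v ∈ I then 1 else 0) with hf
  set g : Finset (Fin n) → Finset (Fin n) := fun I => I \ insert v (G.neighborFinset v) with hgdef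
  have hmaps : ∀ I ∈ indepSets G, g I ∈ (indepSets G).image g :=
    fun I hI => Finset.mem_image_of_mem g hI
  rw [← Finset.sum_fiberwise_of_maps_to hmaps f,
    Finset.card_eq_sum_card_fiberwise hmaps, Nat.cast_sum, Finset.sum_mul]
  apply Finset.sum_le_sum
  intro J hJ
  obtain ⟨I₀, hI₀, hgI₀⟩ := Finset.mem_image.1 hJ
  have hI₀ind : ∀ a ∈ I₀, ∀ b ∈ I₀, ¬ G.Adj a b := by
    have := (Finset.mem_filter.1 hI₀).2; exact this
  have hJd : ∀ x ∈ J, x ∉ insert v (G.neighborFinset v) := by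
    intro x hx; rw [← hgI₀] at hx; exact (Finset.mem_sdiff.1 hx).2
  have hJI₀ : J ⊆ I₀ := by
    intro x hx; rw [← hgI₀] at hx; exact (Finset.mem_sdiff.1 hx).1
  have hJind : ∀ a ∈ J, ∀ b ∈ J, ¬ G.Adj a b :=
    fun a ha b hb => hI₀ind a (hJI₀ ha) b (hJI₀ hb)
  rw [fiber_eq G h3 v J hJd hJind]
  set F := ((G.neighborFinset v).filter (fun u => ∀ w ∈ J, ¬ G.Adj u w)) with hF
  set k := F.card with hk
  have hJF : ∀ S ∈ F.powerset, (J ∪ S) ∩ G.neighborFinset v = S := by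
    intro S hS
    rw [Finset.mem_powerset] at hS
    apply Finset.ext
    intro x
    simp only [Finset.mem_inter, Finset.mem_union]
    constructor
    · rintro ⟨hxJ | hxS, hxN⟩
      · exact absurd (Finset.mem_insert_of_mem hxN) (hJd x hxJ)
      · exact hxS
    · intro hx
      exact ⟨Or.inr hx, (Finset.mem_filter.1 (hS hx)).1⟩
  have hvJS : ∀ S ∈ F.powerset, v ∉ J ∪ S := by
    intro S hS hmem
    rcases Finset.mem_union.1 hmem with h | h
    · exact hJd v h (Finset.mem_insert_self _ _)
    · exact hvNv (Finset.mem_filter.1 (Finset.mem_powerset.1 hS h)).1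
  have hdisj : Disjoint (F.powerset.image (fun S => J ∪ S)) {insert v J} := by
    rw [Finset.disjoint_singleton_right]
    intro hmem
    obtain ⟨S, hS, hJS⟩ := Finset.mem_image.1 hmem
    exact hvJS S hS (hJS ▸ Finset.mem_insert_self v J)
  have hinj : ∀ S ∈ F.powerset, ∀ T ∈ F.powerset, J ∪ S = J ∪ T → S = T := by
    intro S hS T hT hST
    have h1 := hJF S hS
    have h2 := hJF T hT
    rw [← h1, ← h2, hST]
  -- compute the sum
  rw [Finset.sum_union hdisj, Finset.sum_image hinj, Finset.sum_singleton]
  -- compute the card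
  rw [Finset.card_union_of_disjoint hdisj, Finset.card_image_of_injOn hinj,
    Finset.card_powerset, Finset.card_singleton]
  have hfJS : ∀ S ∈ F.powerset, f (J ∪ S) = S.card := by
    intro S hS
    rw [hf]
    simp only [hJF S hS, if_neg (hvJS S hS), mul_zero, add_zero]
  have hfvJ : f (insert v J) = G.maxDegree := by
    rw [hf]
    have h1 : (insert v J) ∩ G.neighborFinset v = ∅ := by
      apply Finset.eq_empty_of_forall_notMem
      intro x hx
      rcases Finset.mem_inter.1 hx with ⟨hx1, hx2⟩
      rcases Finset.mem_insert.1 hx1 with rfl | hx1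
      · exact hvNv hx2
      · exact hJd x hx1 (Finset.mem_insert_of_mem hx2)
    simp [h1]
  rw [Finset.sum_congr rfl hfJS, hfvJ]
  have hsum : ∑ S ∈ F.powerset, (S.card : ℝ) = (k * 2 ^ (k - 1) : ℕ) := by
    rw [← Nat.cast_sum]
    norm_cast
    exact sum_powerset_card F
  rw [hsum]
  have := key_ineq k (G.maxDegree : ℝ) (Nat.cast_nonneg _)
  push_cast at this ⊢
  convert this using 2 <;> push_cast <;> ring


lemma occupancy (G : SimpleGraph (Fin n)) [DecidableRel G.Adj] (h3 : G.CliqueFree 3) :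
    ∃ s : Finset (Fin n), Indep G s ∧
      (n : ℝ) * Real.log (G.maxDegree) ≤ 32 * G.maxDegree * s.card := by
  classical
  have hne : (indepSets G).Nonempty := ⟨∅, by simp [indepSets]⟩
  obtain ⟨s, hs, hmax⟩ := Finset.exists_max_image (indepSets G) Finset.card hne
  refine ⟨s, (Finset.mem_filter.1 hs).2, ?_⟩
  have hdegsum : ∀ I : Finset (Fin n), ∑ v : Fin n, (I ∩ G.neighborFinset v).card
      = ∑ u ∈ I, G.degree u := by
    intro I
    have h1 : ∀ v : Fin n, (I ∩ G.neighborFinset v).card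
        = ∑ u ∈ I, if G.Adj v u then 1 else 0 := by
      intro v
      rw [← Finset.card_filter]
      congr 1
      apply Finset.ext
      intro u
      simp [Finset.mem_inter, Finset.mem_filter, SimpleGraph.mem_neighborFinset]
    rw [Finset.sum_congr rfl (fun v _ => h1 v), Finset.sum_comm]
    apply Finset.sum_congr rfl
    intro u _
    rw [SimpleGraph.degree, SimpleGraph.neighborFinset_eq_filter, ← Finset.card_filter]
    congr 1
    apply Finset.ext
    intro v
    simp [SimpleGraph.adj_comm]
  have hdegle : ∀ I ∈ indepSets G, ∑ u ∈ I, G.degree u ≤ I.card * G.maxDegree := by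
    intro I _
    calc ∑ u ∈ I, G.degree u ≤ ∑ _u ∈ I, G.maxDegree :=
          Finset.sum_le_sum (fun u _ => G.degree_le_maxDegree u)
      _ = I.card * G.maxDegree := by rw [Finset.sum_const, smul_eq_mul]
  have hcardle : ∀ I ∈ indepSets G, I.card ≤ s.card := fun I hI => hmax I hI
  -- sum the per-vertex inequality over v
  have H1 : (n : ℝ) * (((indepSets G).card : ℝ) * (Real.log (G.maxDegree) / 16)) ≤
      ∑ v : Fin n, ∑ I ∈ indepSets G, (((I ∩ G.neighborFinset v).card : ℝ)
        + (G.maxDegree : ℝ) * (if v ∈ I then 1 else 0)) := by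
    calc (n : ℝ) * (((indepSets G).card : ℝ) * (Real.log (G.maxDegree) / 16))
        = ∑ _v : Fin n, ((indepSets G).card : ℝ) * (Real.log (G.maxDegree) / 16) := by
          rw [Finset.sum_const, Finset.card_univ, Fintype.card_fin, nsmul_eq_mul]
      _ ≤ _ := Finset.sum_le_sum (fun v _ => pervertex G h3 v)
  have H2 : ∑ v : Fin n, ∑ I ∈ indepSets G, (((I ∩ G.neighborFinset v).card : ℝ)
        + (G.maxDegree : ℝ) * (if v ∈ I then 1 else 0)) ≤
      2 * (G.maxDegree : ℝ) * (((indepSets G).card : ℝ) * s.card) := by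
    rw [Finset.sum_comm]
    have load : ∀ I ∈ indepSets G,
        ∑ v : Fin n, (((I ∩ G.neighborFinset v).card : ℝ)
          + (G.maxDegree : ℝ) * (if v ∈ I then 1 else 0)) ≤
        2 * (G.maxDegree : ℝ) * s.card := by
      intro I hI
      rw [Finset.sum_add_distrib]
      have e1 : ∑ v : Fin n, ((I ∩ G.neighborFinset v).card : ℝ)
          ≤ (G.maxDegree : ℝ) * s.card := by
        rw [← Nat.cast_sum, hdegsum I]
        have := le_trans (hdegle I hI) (Nat.mul_le_mul_right _ (hcardle I hI))
        calc ((∑ u ∈ I, G.degree u : ℕ) : ℝ) ≤ ((s.card * G.maxDegree : ℕ) : ℝ) := by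
              exact_mod_cast this
          _ = (G.maxDegree : ℝ) * s.card := by push_cast; ring
      have e2 : ∑ v : Fin n, (G.maxDegree : ℝ) * (if v ∈ I then 1 else 0)
          ≤ (G.maxDegree : ℝ) * s.card := by
        rw [← Finset.mul_sum]
        have : ∑ v : Fin n, (if v ∈ I then (1:ℝ) else 0) = I.card := by
          simp [Finset.sum_ite_mem]
        rw [this]
        have : (I.card : ℝ) ≤ s.card := by exact_mod_cast hcardle I hI
        exact mul_le_mul_of_nonneg_left this (Nat.cast_nonneg _)
      linarith
    calc ∑ I ∈ indepSets G, ∑ v : Fin n, (((I ∩ G.neighborFinset v).card : ℝ)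
          + (G.maxDegree : ℝ) * (if v ∈ I then 1 else 0))
        ≤ ∑ _I ∈ indepSets G, 2 * (G.maxDegree : ℝ) * s.card := Finset.sum_le_sum load
      _ = ((indepSets G).card : ℝ) * (2 * (G.maxDegree : ℝ) * s.card) := by
          rw [Finset.sum_const, nsmul_eq_mul]
      _ = 2 * (G.maxDegree : ℝ) * (((indepSets G).card : ℝ) * s.card) := by ring
  have hIpos : (0:ℝ) < ((indepSets G).card : ℝ) := by
    exact_mod_cast Finset.card_pos.2 hne
  have := le_trans H1 H2
  nlinarith [this, hIpos]


lemma aks (hn : (100 : ℝ) ≤ Real.log n) (G : SimpleGraph (Fin n)) [DecidableRel G.Adj]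
    (h3 : G.CliqueFree 3) :
    ∃ s : Finset (Fin n), Indep G s ∧
      Real.sqrt (n * Real.log n) / 1000 ≤ s.card := by
  classical
  set y := Real.log n with hy
  have hn0 : n ≠ 0 := by
    rintro rfl
    have h100 : (100:ℝ) ≤ Real.log ((0:ℕ):ℝ) := hn
    rw [Nat.cast_zero, Real.log_zero] at h100
    linarith
  have hnn0 : (0:ℝ) < n := by positivity
  have hy0 : (0:ℝ) < y := by linarith
  have hyn : y ≤ (n:ℝ) := by
    have := Real.log_le_sub_one_of_pos hnn0
    rw [← hy] at this; linarith
  set s₀ := Real.sqrt (n * y) with hs₀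
  have hs₀pos : 0 < s₀ := Real.sqrt_pos.2 (by positivity)
  have hs₀sq : s₀ * s₀ = n * y := Real.mul_self_sqrt (by positivity)
  set Δ := G.maxDegree with hΔ
  rcases le_or_gt (s₀ / 1000) (Δ : ℝ) with hA | hB
  · -- large max degree
    have : Nonempty (Fin n) := ⟨⟨0, Nat.pos_of_ne_zero hn0⟩⟩
    obtain ⟨v, hv⟩ := G.exists_maximal_degree_vertex
    refine ⟨G.neighborFinset v, nbhd_indep G h3 v, ?_⟩
    rw [SimpleGraph.card_neighborFinset_eq_degree, ← hv]
    exact hA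
  · rcases le_or_gt ((Δ : ℝ) + 1) (1000 * n / s₀) with hB1 | hB2
    · -- small max degree: greedy
      obtain ⟨s, hind, hcard⟩ := greedy G
      refine ⟨s, hind, ?_⟩
      have h1 : (n:ℝ) ≤ s.card * ((Δ:ℝ) + 1) := by exact_mod_cast hcard
      have h2 : (n:ℝ) ≤ s.card * (1000 * n / s₀) := by
        calc (n:ℝ) ≤ s.card * ((Δ:ℝ) + 1) := h1
          _ ≤ s.card * (1000 * n / s₀) :=
            mul_le_mul_of_nonneg_left hB1 (Nat.cast_nonneg _)
      rw [div_le_iff₀ (by norm_num : (0:ℝ) < 1000)]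
      have h3 : (n:ℝ) * s₀ ≤ (s.card : ℝ) * 1000 * n := by
        have hmul := mul_le_mul_of_nonneg_right h2 (le_of_lt hs₀pos)
        calc (n:ℝ) * s₀ ≤ (s.card : ℝ) * (1000 * n / s₀) * s₀ := hmul
          _ = (s.card : ℝ) * 1000 * n := by field_simp
      nlinarith [h3, hnn0]
    · -- middle range: occupancy
      obtain ⟨s, hind, hocc⟩ := occupancy G h3
      refine ⟨s, hind, ?_⟩
      set r := Real.sqrt ((n:ℝ) / y) with hr
      have hr1 : 1 ≤ r := by
        rw [hr]
        rw [show (1:ℝ) = Real.sqrt 1 by simp]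
        apply Real.sqrt_le_sqrt
        rw [le_div_iff₀ hy0]; linarith
      have hrs₀ : r * s₀ = n := by
        rw [hr, hs₀, ← Real.sqrt_mul (by positivity) (↑n * y)]
        have : (n:ℝ) / y * (n * y) = (n:ℝ)^2 := by field_simp
        rw [this, Real.sqrt_sq (le_of_lt hnn0)]
      have hns₀ : (n:ℝ) / s₀ = r := by
        rw [eq_comm, eq_div_iff (ne_of_gt hs₀pos), hrs₀]
      rw [mul_div_assoc, hns₀] at hB2
      have hΔr : r ≤ (Δ : ℝ) := by nlinarith
      have hr0 : (0:ℝ) < r := by linarith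
      have hsqy : (4:ℝ) ≤ Real.sqrt y := by
        have h10 : (10:ℝ) = Real.sqrt 100 := by
          rw [show (100:ℝ) = 10^2 by norm_num, Real.sqrt_sq (by norm_num : (0:ℝ) ≤ 10)]
        have h2 := Real.sqrt_le_sqrt hn
        linarith [h2, h10.symm.le]
      have hsqysq : Real.sqrt y * Real.sqrt y = y := Real.mul_self_sqrt (le_of_lt hy0)
      have hlogy : Real.log y ≤ y / 2 := by
        have l1 : Real.log (Real.sqrt y) ≤ Real.sqrt y - 1 :=
          Real.log_le_sub_one_of_pos (by linarith)
        have l2 : Real.log (Real.sqrt y) = Real.log y / 2 := Real.log_sqrt (le_of_lt hy0)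
        nlinarith
      have hlogΔ : y / 4 ≤ Real.log (Δ : ℝ) := by
        have h1 : Real.log r ≤ Real.log (Δ:ℝ) := Real.log_le_log hr0 hΔr
        have h2 : Real.log r = (Real.log n - Real.log y) / 2 := by
          rw [hr, Real.log_sqrt (by positivity), Real.log_div (ne_of_gt hnn0) (ne_of_gt hy0)]
        rw [h2, ← hy] at h1
        linarith
      have hMnn : (0:ℝ) ≤ (s.card : ℝ) := Nat.cast_nonneg _
      have step1 : (n:ℝ) * (y/4) ≤ (n:ℝ) * Real.log (Δ:ℝ) :=
        mul_le_mul_of_nonneg_left hlogΔ (le_of_lt hnn0)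
      have step2 : 32 * (Δ:ℝ) * s.card ≤ 32 * (s₀/1000) * s.card := by
        apply mul_le_mul_of_nonneg_right _ hMnn
        nlinarith
      have hocc' := hocc
      nlinarith [hs₀sq, hs₀pos]


def coClique (A : Finset (Fin n)) : SimpleGraph (Fin n) where
  Adj a b := a ≠ b ∧ ¬ (a ∈ A ∧ b ∈ A)
  symm := by
    constructor
    intro a b ⟨h1, h2⟩
    exact ⟨h1.symm, fun ⟨x, y⟩ => h2 ⟨y, x⟩⟩
  loopless := ⟨fun a ⟨h, _⟩ => h rfl⟩

instance (A : Finset (Fin n)) : DecidableRel (coClique A).Adj :=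
  fun a b => inferInstanceAs (Decidable (a ≠ b ∧ ¬ (a ∈ A ∧ b ∈ A)))

lemma two_mul_choose_two (t : ℕ) : 2 * t.choose 2 = t * (t - 1) := by
  induction t with
  | zero => simp
  | succ m ih =>
    rw [Nat.choose_succ_succ, Nat.choose_one_right, Nat.mul_add, ih, Nat.succ_sub_one]
    cases m with
    | zero => simp
    | succ k => rw [Nat.succ_sub_one]; ring

lemma coClique_edges (A : Finset (Fin n)) :
    (coClique A).edgeSet.ncard + (A.card).choose 2 ≤ n.choose 2 := by
  classical
  have hncard : (coClique A).edgeSet.ncard = (coClique A).edgeFinset.card := by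
    rw [← SimpleGraph.coe_edgeFinset, Set.ncard_coe_finset]
  set img := A.offDiag.image (fun p => Sym2.mk p.1 p.2) with himg
  have hfib : ∀ e ∈ img, (A.offDiag.filter (fun p => Sym2.mk p.1 p.2 = e)).card ≤ 2 := by
    intro e he
    obtain ⟨⟨a, b⟩, hp, rfl⟩ := Finset.mem_image.1 he
    have hsub : A.offDiag.filter (fun q => Sym2.mk q.1 q.2 = Sym2.mk a b) ⊆
        {(a, b), (b, a)} := by
      intro q hq
      rcases Finset.mem_filter.1 hq with ⟨_, hq2⟩
      have hq3 : q.1 = a ∧ q.2 = b ∨ q.1 = b ∧ q.2 = a := by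
        rw [Sym2.eq_iff] at hq2
        exact hq2
      rcases hq3 with ⟨h1, h2⟩ | ⟨h1, h2⟩ <;>
        simp [Finset.mem_insert, Finset.mem_singleton, Prod.ext_iff, h1, h2]
    calc _ ≤ ({(a, b), (b, a)} : Finset (Fin n × Fin n)).card := Finset.card_le_card hsub
      _ ≤ 2 := (Finset.card_insert_le _ _).trans (by simp)
  have hoff : A.offDiag.card ≤ 2 * img.card := Finset.card_le_mul_card_image _ 2 hfib
  have himgcard : (A.card).choose 2 ≤ img.card := by
    have e1 : A.offDiag.card = A.card * A.card - A.card := Finset.offDiag_card _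
    have e2 : 2 * (A.card).choose 2 = A.card * (A.card - 1) := two_mul_choose_two _
    have e3 : A.card * (A.card - 1) = A.card * A.card - A.card := Nat.mul_pred _ _
    omega
  have hdisj : Disjoint (coClique A).edgeFinset img := by
    rw [Finset.disjoint_right]
    intro e he hmem
    obtain ⟨⟨a, b⟩, hp, rfl⟩ := Finset.mem_image.1 he
    rcases Finset.mem_offDiag.1 hp with ⟨ha, hb, hab⟩
    have : (coClique A).Adj a b := by
      rw [← SimpleGraph.mem_edgeSet]
      exact SimpleGraph.mem_edgeFinset.1 hmem
    exact this.2 ⟨ha, hb⟩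
  have hsub : (coClique A).edgeFinset ∪ img ⊆ (⊤ : SimpleGraph (Fin n)).edgeFinset := by
    intro e he
    rcases Finset.mem_union.1 he with he | he
    · exact SimpleGraph.edgeFinset_mono le_top he
    · obtain ⟨⟨a, b⟩, hp, rfl⟩ := Finset.mem_image.1 he
      rcases Finset.mem_offDiag.1 hp with ⟨_, _, hab⟩
      rw [SimpleGraph.mem_edgeFinset, SimpleGraph.mem_edgeSet]
      exact hab
  calc (coClique A).edgeSet.ncard + (A.card).choose 2
      ≤ (coClique A).edgeFinset.card + img.card := by omega
    _ = ((coClique A).edgeFinset ∪ img).card := (Finset.card_union_of_disjoint hdisj).symm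
    _ ≤ (⊤ : SimpleGraph (Fin n)).edgeFinset.card := Finset.card_le_card hsub
    _ = n.choose 2 := by
      rw [SimpleGraph.card_edgeFinset_top_eq_card_choose_two, Fintype.card_fin]

end AuxProof

/-- There exists C > 0 such that for all sufficiently large n, with
p = C·√(log n / n), there is a collection 𝒢 of graphs on [n] such that every
triangle-free graph on [n] is a subgraph of some member of 𝒢 and
Σ_{G∈𝒢} (1−p)^{C(n,2) − e(G)} ≤ 1/2: the expectation-threshold of the down-set of
triangle-free graphs is O(√(log n / n)). -/
theorem stmt10 :
    ∃ C : ℝ, 0 < C ∧ ∃ N : ℕ, ∀ n : ℕ, N ≤ n →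
      ∃ 𝓖 : Finset (SimpleGraph (Fin n)),
        (∀ T : SimpleGraph (Fin n), T.CliqueFree 3 → ∃ G ∈ 𝓖, T ≤ G) ∧
        ∑ G ∈ 𝓖, (1 - C * Real.sqrt (Real.log n / n)) ^ (n.choose 2 - G.edgeSet.ncard) ≤
          1 / 2 := by
  classical
  refine ⟨(10:ℝ)^7, by norm_num, ⌈Real.exp 100⌉₊ + 1, ?_⟩
  intro n hn
  have hnn0 : (0:ℝ) < n := by
    have h1 : (1:ℕ) ≤ n := le_trans (Nat.le_add_left 1 _) hn
    exact_mod_cast Nat.lt_of_lt_of_le Nat.zero_lt_one h1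
  have hexpn : Real.exp 100 ≤ (n:ℝ) := by
    have h1 : Real.exp 100 ≤ (⌈Real.exp 100⌉₊ : ℝ) := Nat.le_ceil _
    have h2 : (⌈Real.exp 100⌉₊ : ℝ) ≤ (n:ℝ) := by
      exact_mod_cast le_trans (Nat.le_succ _) hn
    linarith
  have hlog : (100 : ℝ) ≤ Real.log n := (Real.le_log_iff_exp_le hnn0).2 hexpn
  set y := Real.log n with hy
  set p := (10:ℝ)^7 * Real.sqrt (y / n) with hp
  set s₀ := Real.sqrt (n * y) with hs₀
  set t := ⌈s₀ / 1000⌉₊ with ht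
  have hy0 : (0:ℝ) < y := by linarith
  -- n is very large compared to y
  have h2e : (2:ℝ) ≤ Real.exp 1 := by
    have := Real.add_one_le_exp 1; linarith
  have hexp50 : (10:ℝ)^14 ≤ Real.exp 50 := by
    have h1 : Real.exp 50 = Real.exp 1 ^ (50:ℕ) := by
      rw [← Real.exp_nat_mul]; norm_num
    have h2 : (2:ℝ)^(50:ℕ) ≤ Real.exp 1 ^ (50:ℕ) := pow_le_pow_left₀ (by norm_num) h2e 50
    have h3 : (10:ℝ)^14 ≤ (2:ℝ)^(50:ℕ) := by norm_num
    linarith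
  have hexpy2 : y ≤ Real.exp (y/2) := by
    have h1 : Real.exp (y/2) = Real.exp (y/4) ^ (2:ℕ) := by
      rw [← Real.exp_nat_mul]; ring_nf
    have h2 : 1 + y/4 ≤ Real.exp (y/4) := by have := Real.add_one_le_exp (y/4); linarith
    have h3 : (0:ℝ) ≤ 1 + y/4 := by linarith
    rw [h1]
    nlinarith
  have hnbig : (10:ℝ)^14 * y ≤ (n:ℝ) := by
    have h1 : (n:ℝ) = Real.exp y := (Real.exp_log hnn0).symm
    have h2 : Real.exp y = Real.exp (y/2) * Real.exp (y/2) := by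
      rw [← Real.exp_add]; ring_nf
    have h3 : Real.exp 50 ≤ Real.exp (y/2) := Real.exp_le_exp.2 (by linarith)
    have h4 : (10:ℝ)^14 ≤ Real.exp (y/2) := by linarith
    have h5 : (0:ℝ) ≤ y := le_of_lt hy0
    rw [h1, h2]
    have := mul_le_mul h4 hexpy2 h5 (le_of_lt (Real.exp_pos _))
    linarith
  have hsq0 : (0:ℝ) < Real.sqrt (y / n) := Real.sqrt_pos.2 (div_pos hy0 hnn0)
  have hp0 : (0:ℝ) < p := by positivity
  have hp1 : p ≤ 1 := by
    have h1 : y / n ≤ (1/(10:ℝ)^7)^2 := by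
      rw [div_le_iff₀ hnn0]
      nlinarith
    have h2 : Real.sqrt (y/n) ≤ 1/(10:ℝ)^7 := by
      have := Real.sqrt_le_sqrt h1
      rwa [Real.sqrt_sq (by norm_num : (0:ℝ) ≤ 1/(10:ℝ)^7)] at this
    calc p ≤ (10:ℝ)^7 * (1/(10:ℝ)^7) := by
          exact mul_le_mul_of_nonneg_left h2 (by norm_num)
      _ = 1 := by norm_num
  have hs₀pos : (0:ℝ) < s₀ := Real.sqrt_pos.2 (by positivity)
  have hps₀ : p * s₀ = (10:ℝ)^7 * y := by
    have h1 : Real.sqrt (y/n) * Real.sqrt (n * y) = y := by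
      rw [← Real.sqrt_mul (le_of_lt (div_pos hy0 hnn0))]
      have h2 : y / n * (n * y) = y^2 := by field_simp
      rw [h2, Real.sqrt_sq (le_of_lt hy0)]
    calc p * s₀ = (10:ℝ)^7 * (Real.sqrt (y/n) * Real.sqrt (n*y)) := by rw [hp, hs₀]; ring
      _ = (10:ℝ)^7 * y := by rw [h1]
  have hs₀2000 : (2000:ℝ) ≤ s₀ := by
    have h1 : (2000:ℝ)^2 ≤ (n:ℝ) * y := by nlinarith
    have h2 := Real.sqrt_le_sqrt h1
    rwa [Real.sqrt_sq (by norm_num : (0:ℝ) ≤ 2000)] at h2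
  have ht1 : 1 ≤ t := by
    rw [ht]
    exact Nat.one_le_iff_ne_zero.2 (by
      intro h
      have := Nat.ceil_eq_zero.1 h
      have : s₀ / 1000 ≤ 0 := this
      nlinarith)
  have htlo : s₀ / 1000 ≤ (t:ℝ) := Nat.le_ceil _
  have hthi : (t:ℝ) ≤ s₀/1000 + 1 := by
    have := Nat.ceil_lt_add_one (by positivity : (0:ℝ) ≤ s₀/1000)
    linarith
  have hK : (2:ℝ) * (t.choose 2 : ℝ) = (t:ℝ) * ((t:ℝ) - 1) := by
    have h := two_mul_choose_two t
    have h2 := congrArg (Nat.cast : ℕ → ℝ) h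
    push_cast [Nat.cast_sub ht1] at h2
    linarith
  -- the key exponent inequality
  have hexp : (t:ℝ) * y + 1 ≤ p * (t.choose 2 : ℝ) := by
    have h1 : s₀/2000 ≤ (t:ℝ) - 1 := by linarith
    have h2 : (s₀/1000) * (s₀/2000) ≤ (t:ℝ) * ((t:ℝ) - 1) :=
      mul_le_mul htlo h1 (by positivity) (Nat.cast_nonneg _)
    have h3 : p * ((s₀/1000) * (s₀/2000)) ≤ p * ((t:ℝ) * ((t:ℝ) - 1)) :=
      mul_le_mul_of_nonneg_left h2 (le_of_lt hp0)
    have h4 : p * ((s₀/1000) * (s₀/2000)) = 5 * (y * s₀) := by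
      have : p * ((s₀/1000) * (s₀/2000)) = (p * s₀) * s₀ / 2000000 := by ring
      rw [this, hps₀]; ring
    have h5 : 5 * (y * s₀) ≤ p * ((t:ℝ) * ((t:ℝ) - 1)) := by linarith
    have h6 : (t:ℝ) * y ≤ (s₀/1000 + 1) * y :=
      mul_le_mul_of_nonneg_right hthi (le_of_lt hy0)
    have hz : 2000 * y ≤ y * s₀ := by
      have := mul_le_mul_of_nonneg_left hs₀2000 (le_of_lt hy0)
      linarith [this]
    have hz2 : (200000:ℝ) ≤ y * s₀ := by
      have := mul_le_mul hlog hs₀2000 (by norm_num : (0:ℝ) ≤ 2000) (le_of_lt hy0)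
      linarith [this]
    have h7 : p * ((t:ℝ) * ((t:ℝ) - 1)) = 2 * (p * (t.choose 2:ℝ)) := by
      rw [← hK]; ring
    linarith [h5, h6, hz, hz2, h7]
  letI : DecidableEq (SimpleGraph (Fin n)) := Classical.decEq _
  set 𝓖 : Finset (SimpleGraph (Fin n)) := (Finset.univ.powersetCard t).image coClique with h𝓖
  refine ⟨𝓖, ?_, ?_⟩
  · intro T hT
    letI : DecidableRel T.Adj := Classical.decRel _
    obtain ⟨s, hind, hcard⟩ := aks hlog T hT
    have hts : t ≤ s.card := by
      rw [ht]
      exact Nat.ceil_le.2 hcard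
    obtain ⟨S, hSs, hScard⟩ := Finset.exists_subset_card_eq hts
    refine ⟨coClique S, Finset.mem_image_of_mem _ ?_, ?_⟩
    · rw [Finset.mem_powersetCard]
      exact ⟨Finset.subset_univ S, hScard⟩
    · intro a b hab
      exact ⟨hab.ne, fun ⟨haS, hbS⟩ => hind a (hSs haS) b (hSs hbS) hab⟩
  · have h1p0 : (0:ℝ) ≤ 1 - p := by linarith
    have h1p1 : (1:ℝ) - p ≤ 1 := by linarith
    have hterm : ∀ G ∈ 𝓖, (1-p)^(n.choose 2 - G.edgeSet.ncard) ≤ (1-p)^(t.choose 2) := by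
      intro G hG
      obtain ⟨A, hA, rfl⟩ := Finset.mem_image.1 hG
      have hAcard : A.card = t := (Finset.mem_powersetCard.1 hA).2
      have hedge := coClique_edges A
      rw [hAcard] at hedge
      exact pow_le_pow_of_le_one h1p0 h1p1 (by omega)
    have hcard𝓖 : 𝓖.card ≤ n.choose t := by
      calc 𝓖.card ≤ (Finset.univ.powersetCard t : Finset (Finset (Fin n))).card :=
            Finset.card_image_le
        _ = n.choose t := by rw [Finset.card_powersetCard, Finset.card_univ, Fintype.card_fin]
    have hppow : (0:ℝ) ≤ (1-p)^(t.choose 2) := pow_nonneg h1p0 _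
    have hlog2 : Real.log 2 ≤ 1 := by
      have := Real.log_le_sub_one_of_pos (by norm_num : (0:ℝ) < 2); linarith
    calc ∑ G ∈ 𝓖, (1-p)^(n.choose 2 - G.edgeSet.ncard)
        ≤ 𝓖.card • (1-p)^(t.choose 2) := Finset.sum_le_card_nsmul _ _ _ hterm
      _ = (𝓖.card : ℝ) * (1-p)^(t.choose 2) := nsmul_eq_mul _ _
      _ ≤ (n.choose t : ℝ) * (1-p)^(t.choose 2) :=
          mul_le_mul_of_nonneg_right (by exact_mod_cast hcard𝓖) hppow
      _ ≤ ((n:ℝ))^t * Real.exp (-p) ^ (t.choose 2) := by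
          apply mul_le_mul
          · exact_mod_cast Nat.choose_le_pow n t
          · exact pow_le_pow_left₀ h1p0 (by linarith [Real.add_one_le_exp (-p)]) _
          · exact hppow
          · positivity
      _ = Real.exp ((t:ℝ) * y - p * (t.choose 2 : ℝ)) := by
          rw [show (n:ℝ) = Real.exp y from (Real.exp_log hnn0).symm,
            ← Real.exp_nat_mul, ← Real.exp_nat_mul, ← Real.exp_add]
          congr 1
          ring
      _ ≤ Real.exp (- Real.log 2) := Real.exp_le_exp.2 (by linarith)
      _ = 1/2 := by rw [Real.exp_neg, Real.exp_log (by norm_num : (0:ℝ) < 2)]; norm_num
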